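/- Let a ∈ (−1, 0). For every n ≥ 1, the polynomial S_n(x) = (−i)^n R_n(ix) has exactly n real roots, all simple, and the roots of S_n and S_{n+1} strictly interlace. -/

import Mathlib

open Polynomial Complex

/-- The elephant polynomials over `ℂ` with real parameter `a`. -/
noncomputable def elephantRC (a : ℝ) : ℕ → Polynomial ℂ
  | 0 => 1
  | 1 => X
  | n + 2 => X * elephantRC a (n + 1) -
      C ((a : ℂ) / ((n : ℂ) + 1)) * ((1 - X ^ 2) * (elephantRC a (n + 1)).derivative)

/-- `S a n = (-i)^n * R_n (i x)`. -/
noncomputable def elephantS (a : ℝ) (n : ℕ) : Polynomial ℂ :=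
  C ((-Complex.I) ^ n) * (elephantRC a n).comp (C Complex.I * X)

noncomputable def elT (a : ℝ) : ℕ → Polynomial ℝ
  | 0 => 1
  | 1 => X
  | n + 2 => X * elT a (n + 1) +
      C (a / ((n : ℝ) + 1)) * ((1 + X ^ 2) * (elT a (n + 1)).derivative)

lemma elT_rec (a : ℝ) (n : ℕ) (hn : 1 ≤ n) :
    elT a (n + 1) = X * elT a n + C (a / (n : ℝ)) * ((1 + X ^ 2) * (elT a n).derivative) := by
  cases n with
  | zero => omega
  | succ m =>
    show elT a (m + 2) = _
    rw [elT]
    push_cast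
    ring_nf

lemma comp_eq (a : ℝ) (n : ℕ) :
    (elephantRC a n).comp (C Complex.I * X) =
      C (Complex.I ^ n) * (elT a n).map (algebraMap ℝ ℂ) := by
  induction n using Nat.strong_induction_on with
  | _ n ih =>
    match n with
    | 0 => simp [elephantRC, elT]
    | 1 => simp [elephantRC, elT]
    | (m + 2) =>
      have ih1 := ih (m + 1) (by omega)
      have hder : (elephantRC a (m + 1)).derivative.comp (C Complex.I * X) =
          C (-Complex.I * Complex.I ^ (m + 1)) * ((elT a (m + 1)).derivative).map (algebraMap ℝ ℂ) := by
        have h := congrArg derivative ih1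
        rw [derivative_comp] at h
        have h2 : derivative (C Complex.I * X) = C Complex.I := by simp
        rw [h2] at h
        -- h : C I * (derivative RC).comp (C I * X) = derivative (C (I^(m+1)) * map ...)
        have h3 : derivative (C (Complex.I ^ (m + 1)) * (elT a (m + 1)).map (algebraMap ℝ ℂ))
            = C (Complex.I ^ (m + 1)) * ((elT a (m + 1)).derivative).map (algebraMap ℝ ℂ) := by
          rw [derivative_mul, derivative_C, derivative_map]; ring
        rw [h3] at h
        have := congrArg (fun p => C (-Complex.I) * p) h
        calc (elephantRC a (m + 1)).derivative.comp (C Complex.I * X)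
            = C (-Complex.I) * (C Complex.I * (elephantRC a (m + 1)).derivative.comp (C Complex.I * X)) := by
              rw [← mul_assoc, ← C_mul]; simp
          _ = C (-Complex.I) * (C (Complex.I ^ (m + 1)) * ((elT a (m + 1)).derivative).map (algebraMap ℝ ℂ)) := by rw [h]
          _ = _ := by rw [← mul_assoc, ← C_mul]
      show (X * elephantRC a (m + 1) -
          C ((a : ℂ) / ((m : ℂ) + 1)) * ((1 - X ^ 2) * (elephantRC a (m + 1)).derivative)).comp
            (C Complex.I * X) = _
      rw [elT_rec a (m + 1) (by omega)]
      simp only [sub_comp, mul_comp, X_comp, C_comp, one_comp, pow_comp]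
      rw [ih1, hder]
      rw [Polynomial.map_add, Polynomial.map_mul, Polynomial.map_mul, Polynomial.map_mul,
        Polynomial.map_add, Polynomial.map_one, Polynomial.map_pow, map_X, map_C]
      have hsq : (C Complex.I * X) ^ 2 = -(X ^ 2) := by
        rw [mul_pow, ← C_pow, Complex.I_sq]; simp
      rw [hsq]
      have hcast : algebraMap ℝ ℂ (a / ((m + 1 : ℕ) : ℝ)) = (a : ℂ) / ((m : ℂ) + 1) := by
        rw [Complex.coe_algebraMap, Complex.ofReal_div]
        push_cast
        ring
      rw [hcast]
      have hI : Complex.I ^ (m + 1 + 1) = Complex.I * Complex.I ^ (m + 1) := by ring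
      rw [hI]
      simp only [map_mul, map_neg]
      ring

lemma S_eq_map (a : ℝ) (n : ℕ) :
    elephantS a n = (elT a n).map (algebraMap ℝ ℂ) := by
  rw [elephantS, comp_eq, ← mul_assoc, ← C_mul, ← mul_pow]
  simp


open Polynomial Complex Finset

-- generic helpers
lemma neg_one_pow_mul_self (m : ℕ) : ((-1 : ℝ)) ^ m * (-1) ^ m = 1 := by
  rw [← mul_pow]; norm_num

lemma prod_erase_sign {n : ℕ} {β : Fin n → ℝ} (hβ : StrictMono β) (k : Fin n) :
    0 < (-1 : ℝ) ^ (n - 1 - (k : ℕ)) * ∏ j ∈ Finset.univ.erase k, (β k - β j) := by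
  classical
  have hsplit : Finset.univ.erase k = Finset.Iio k ∪ Finset.Ioi k := by
    ext j
    simp only [Finset.mem_erase, Finset.mem_univ, and_true, Finset.mem_union, Finset.mem_Iio,
      Finset.mem_Ioi]
    exact ne_iff_lt_or_gt
  have hdisj : Disjoint (Finset.Iio k) (Finset.Ioi k) := by
    rw [Finset.disjoint_left]
    intro j hj hj'
    exact absurd (lt_trans (Finset.mem_Iio.1 hj) (Finset.mem_Ioi.1 hj')) (lt_irrefl j)
  rw [hsplit, Finset.prod_union hdisj]
  have h1 : 0 < ∏ j ∈ Finset.Iio k, (β k - β j) :=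
    Finset.prod_pos fun j hj => sub_pos.2 (hβ (Finset.mem_Iio.1 hj))
  have h2 : ∏ j ∈ Finset.Ioi k, (β k - β j)
      = (-1 : ℝ) ^ (n - 1 - (k : ℕ)) * ∏ j ∈ Finset.Ioi k, (β j - β k) := by
    calc ∏ j ∈ Finset.Ioi k, (β k - β j) = ∏ j ∈ Finset.Ioi k, (-1) * (β j - β k) := by
          apply Finset.prod_congr rfl; intros; ring
      _ = (-1 : ℝ) ^ (Finset.Ioi k).card * ∏ j ∈ Finset.Ioi k, (β j - β k) := by
          rw [Finset.prod_mul_distrib, Finset.prod_const]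
      _ = _ := by rw [Fin.card_Ioi]
  have h2' : 0 < ∏ j ∈ Finset.Ioi k, (β j - β k) :=
    Finset.prod_pos fun j hj => sub_pos.2 (hβ (Finset.mem_Ioi.1 hj))
  rw [h2]
  have key : ∀ x P1 P2 : ℝ, x * (P1 * (x * P2)) = (x * x) * (P1 * P2) := by intros; ring
  rw [key, neg_one_pow_mul_self, one_mul]
  exact mul_pos h1 h2'

-- factorization consequences
section fac
variable {n : ℕ} {c : ℝ} {β : Fin n → ℝ} {p : ℝ[X]}
  (hfac : p = C c * ∏ k, (X - C (β k)))

include hfac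

lemma fac_eval (x : ℝ) : p.eval x = c * ∏ k, (x - β k) := by
  simp [hfac, eval_prod]

lemma fac_deriv_eval (k : Fin n) :
    p.derivative.eval (β k) = c * ∏ j ∈ Finset.univ.erase k, (β k - β j) := by
  classical
  have hsplit := Finset.mul_prod_erase Finset.univ (fun j => (X : ℝ[X]) - C (β j))
    (Finset.mem_univ k)
  have h : p = C c * ((X - C (β k)) * ∏ j ∈ Finset.univ.erase k, (X - C (β j))) := by
    rw [hfac, ← hsplit]
  rw [h]
  rw [derivative_mul, derivative_C, derivative_mul, derivative_X_sub_C]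
  simp [eval_prod]

lemma fac_natDegree (hc : c ≠ 0) : p.natDegree = n := by
  have hm : (∏ k : Fin n, (X - C (β k))).Monic :=
    monic_prod_of_monic _ _ fun k _ => monic_X_sub_C (β k)
  have hd : (∏ k : Fin n, (X - C (β k))).natDegree = n := by
    rw [natDegree_prod_of_monic _ _ fun k _ => monic_X_sub_C (β k)]
    simp
  rw [hfac, natDegree_C_mul hc, hd]

lemma fac_coeff (hc : c ≠ 0) : p.coeff n = c := by
  have hm : (∏ k : Fin n, (X - C (β k))).Monic :=
    monic_prod_of_monic _ _ fun k _ => monic_X_sub_C (β k)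
  have hd : (∏ k : Fin n, (X - C (β k))).natDegree = n := by
    rw [natDegree_prod_of_monic _ _ fun k _ => monic_X_sub_C (β k)]
    simp
  rw [hfac, coeff_C_mul]
  have h1 := hm.coeff_natDegree
  rw [hd] at h1
  rw [h1, mul_one]

end fac

-- IVT helper
lemma ivt_root {f : ℝ[X]} {u v : ℝ} (huv : u < v) (h : f.eval u * f.eval v < 0) :
    ∃ x, x ∈ Set.Ioo u v ∧ f.eval x = 0 := by
  have hc : ContinuousOn (fun x => f.eval x) (Set.Icc u v) :=
    (f.continuous_aeval).continuousOn
  rcases mul_neg_iff.1 h with ⟨h1, h2⟩ | ⟨h1, h2⟩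
  · have : (0 : ℝ) ∈ Set.Ioo (f.eval v) (f.eval u) := ⟨h2, h1⟩
    rcases intermediate_value_Ioo' huv.le hc this with ⟨x, hx, hfx⟩
    exact ⟨x, hx, hfx⟩
  · have : (0 : ℝ) ∈ Set.Ioo (f.eval u) (f.eval v) := ⟨h1, h2⟩
    rcases intermediate_value_Ioo huv.le hc this with ⟨x, hx, hfx⟩
    exact ⟨x, hx, hfx⟩

lemma exists_eval_pos {p : ℝ[X]} (hdeg : 0 < p.natDegree) (hlc : 0 < p.leadingCoeff) (b : ℝ) :
    ∃ x, b < x ∧ 0 < p.eval x := by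
  have hdeg' : 0 < p.degree := natDegree_pos_iff_degree_pos.1 hdeg
  have ht := p.tendsto_atTop_of_leadingCoeff_nonneg hdeg' hlc.le
  have h1 := ht.eventually_gt_atTop 0
  have h2 := Filter.eventually_gt_atTop b
  rcases (h1.and h2).exists with ⟨x, hx1, hx2⟩
  exact ⟨x, hx2, hx1⟩

lemma exists_eval_neg_sign {p : ℝ[X]} (hdeg : 0 < p.natDegree) (hlc : 0 < p.leadingCoeff) (b : ℝ) :
    ∃ x, x < b ∧ 0 < (-1 : ℝ) ^ p.natDegree * p.eval x := by
  set d := p.natDegree with hd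
  set q : ℝ[X] := C ((-1 : ℝ) ^ d) * p.comp (-X) with hq
  have hcompdeg : (p.comp (-X)).natDegree = d := by
    rw [natDegree_comp]
    simp
    exact hd.symm
  have hqdeg : q.natDegree = d := by
    rw [hq, natDegree_C_mul (by positivity : ((-1:ℝ)^d) ≠ 0)]
    exact hcompdeg
  have hqlc : q.leadingCoeff = p.leadingCoeff := by
    rw [hq, leadingCoeff_mul, leadingCoeff_C]
    rw [leadingCoeff_comp (by simp : (-X : ℝ[X]).natDegree ≠ 0)]
    have : (-X : ℝ[X]).leadingCoeff = -1 := by simp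
    rw [this, ← hd]
    rw [← mul_assoc]
    rw [mul_comm ((-1:ℝ)^d) p.leadingCoeff, mul_assoc, neg_one_pow_mul_self, mul_one]
  have hq0 : 0 < q.natDegree := by rw [hqdeg]; exact hdeg
  rcases exists_eval_pos hq0 (by rw [hqlc]; exact hlc) (-b) with ⟨x, hx1, hx2⟩
  refine ⟨-x, by linarith, ?_⟩
  have : q.eval x = (-1 : ℝ) ^ d * p.eval (-x) := by
    rw [hq]
    simp [eval_comp]
  rw [this] at hx2
  exact hx2
lemma step (a : ℝ) (ha1 : -1 < a) (ha2 : a < 0) {n : ℕ} (hn : 1 ≤ n)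
    {β : Fin n → ℝ} (hβ : StrictMono β)
    (hfac : elT a n = C ((a + 1) ^ (n - 1)) * ∏ k, (X - C (β k))) :
    ∃ γ : Fin (n + 1) → ℝ, StrictMono γ ∧
      elT a (n + 1) = C ((a + 1) ^ n) * ∏ k, (X - C (γ k)) ∧
      ∀ k : Fin n, γ k.castSucc < β k ∧ β k < γ k.succ := by
  classical
  have ha1' : (0:ℝ) < a + 1 := by linarith
  have hc : (0:ℝ) < (a + 1) ^ (n - 1) := by positivity
  set c := (a + 1) ^ (n - 1) with hcdef
  set p := elT a (n + 1) with hp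
  have hrec := elT_rec a n hn
  have hn0 : ((n:ℝ)) ≠ 0 := Nat.cast_ne_zero.2 (by omega)
  have hnpos : (0:ℝ) < (n:ℝ) := by positivity
  have hTdeg : (elT a n).natDegree = n := fac_natDegree hfac hc.ne'
  have hTcoeff : (elT a n).coeff n = c := fac_coeff hfac hc.ne'
  -- coefficient computations
  have hderiv_coeff : (elT a n).derivative.coeff (n - 1) = c * n := by
    have h := coeff_derivative (elT a n) (n - 1)
    rw [show n - 1 + 1 = n by omega] at h
    rw [h, hTcoeff, Nat.cast_sub hn]
    push_cast
    ring
  have hderiv_deg : (elT a n).derivative.natDegree ≤ n - 1 := by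
    have := natDegree_derivative_le (elT a n)
    rwa [hTdeg] at this
  have hco : p.coeff (n + 1) = (a + 1) ^ n := by
    rw [hp, hrec, coeff_add, coeff_X_mul, coeff_C_mul]
    have h1 : ((1 + X ^ 2) * (elT a n).derivative).coeff (n + 1)
        = (elT a n).derivative.coeff (n + 1) + (elT a n).derivative.coeff (n - 1) := by
      rw [add_mul, one_mul, coeff_add]
      congr 1
      have h2 := coeff_X_pow_mul ((elT a n).derivative) 2 (n - 1)
      rw [show n - 1 + 2 = n + 1 by omega] at h2
      exact h2
    have h2 : (elT a n).derivative.coeff (n + 1) = 0 :=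
      coeff_eq_zero_of_natDegree_lt (lt_of_le_of_lt hderiv_deg (by omega))
    rw [hTcoeff, h1, h2, hderiv_coeff, zero_add]
    have h3 : a / n * (c * n) = a * c := by field_simp
    rw [h3]
    have h4 : c + a * c = (a + 1) ^ (n - 1) * (a + 1) := by rw [hcdef]; ring
    rw [h4, ← pow_succ, show n - 1 + 1 = n by omega]
  have hdeg_le : p.natDegree ≤ n + 1 := by
    rw [hp, hrec]
    apply le_trans (natDegree_add_le _ _)
    apply max_le
    · exact le_trans natDegree_mul_le (by rw [natDegree_X, hTdeg]; omega)
    · apply le_trans (natDegree_mul_le)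
      have hx : ((1:ℝ[X]) + X ^ 2).natDegree ≤ 2 :=
        le_trans (natDegree_add_le _ _) (by simp)
      calc (C (a / ↑n)).natDegree + ((1 + X ^ 2) * (elT a n).derivative).natDegree
          ≤ 0 + (((1:ℝ[X]) + X ^ 2).natDegree + (elT a n).derivative.natDegree) := by
            apply add_le_add (le_of_eq (natDegree_C _)) (natDegree_mul_le)
        _ ≤ 0 + (2 + (n - 1)) := by
            apply Nat.add_le_add_left
            exact add_le_add hx hderiv_deg
        _ ≤ n + 1 := by omega
  have hco_ne : p.coeff (n + 1) ≠ 0 := by rw [hco]; positivity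
  have hdeg : p.natDegree = n + 1 := le_antisymm hdeg_le (le_natDegree_of_ne_zero hco_ne)
  have hlc : p.leadingCoeff = (a + 1) ^ n := by rw [leadingCoeff, hdeg, hco]
  have hlcpos : 0 < p.leadingCoeff := by rw [hlc]; positivity
  have hdegpos : 0 < p.natDegree := by omega
  -- eval facts
  have hTroot : ∀ k, (elT a n).eval (β k) = 0 := fun k => by
    rw [fac_eval hfac]
    exact mul_eq_zero_of_right _ (Finset.prod_eq_zero (Finset.mem_univ k) (by ring))
  have hE : ∀ k, p.eval (β k)
      = a / n * ((1 + β k ^ 2) * ((elT a n).derivative.eval (β k))) := by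
    intro k
    have h : p.eval (β k) = β k * (elT a n).eval (β k)
        + a / n * ((1 + β k ^ 2) * (elT a n).derivative.eval (β k)) := by
      rw [hp, hrec]; simp
    rw [h, hTroot k]; ring
  -- sign of p at the roots of elT a n
  have hsign : ∀ k : Fin n, (-1:ℝ) ^ (n - 1 - (k:ℕ)) * p.eval (β k) < 0 := by
    intro k
    have h4 := prod_erase_sign hβ k
    have h1 : a / (n:ℝ) < 0 := div_neg_of_neg_of_pos ha2 hnpos
    rw [hE k, fac_deriv_eval hfac k]
    have key : (-1:ℝ) ^ (n - 1 - (k:ℕ)) *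
        (a / n * ((1 + β k ^ 2) * (c * ∏ j ∈ Finset.univ.erase k, (β k - β j))))
        = a / n * ((1 + β k ^ 2) *
          (c * ((-1:ℝ) ^ (n - 1 - (k:ℕ)) * ∏ j ∈ Finset.univ.erase k, (β k - β j)))) := by
      ring
    rw [key]
    exact mul_neg_of_neg_of_pos h1 (mul_pos (by positivity) (mul_pos hc h4))
  -- adjacent products are negative
  have hadj : ∀ (k : ℕ) (h1 : k + 1 < n),
      p.eval (β ⟨k, by omega⟩) * p.eval (β ⟨k + 1, h1⟩) < 0 := by
    intro k h1
    have hs1 := hsign ⟨k, by omega⟩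
    have hs2 := hsign ⟨k + 1, h1⟩
    set E1 := p.eval (β ⟨k, by omega⟩) with hE1
    set E2 := p.eval (β ⟨k + 1, h1⟩) with hE2
    have e2 : n - 1 - (k + 1) + 1 = n - 1 - k := by omega
    rw [← e2, pow_succ] at hs1
    have hs1' : 0 < (-1:ℝ) ^ (n - 1 - (k + 1)) * E1 := by nlinarith [hs1]
    have hmul := mul_neg_of_pos_of_neg hs1' hs2
    have h3 : ((-1:ℝ) ^ (n - 1 - (k + 1)) * E1) * ((-1:ℝ) ^ (n - 1 - (k + 1)) * E2)
        = ((-1:ℝ) ^ (n - 1 - (k + 1)) * (-1:ℝ) ^ (n - 1 - (k + 1))) * (E1 * E2) := by ring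
    rw [h3, neg_one_pow_mul_self, one_mul] at hmul
    exact hmul
  -- top root
  have hlastsign : p.eval (β ⟨n - 1, by omega⟩) < 0 := by
    have h := hsign ⟨n - 1, by omega⟩
    rw [show n - 1 - ((⟨n - 1, by omega⟩ : Fin n) : ℕ) = 0 from by simp] at h
    simpa using h
  obtain ⟨x0, hx0gt, hx0pos⟩ := exists_eval_pos hdegpos hlcpos (β ⟨n - 1, by omega⟩)
  obtain ⟨rtop, hrtop_mem, hrtop⟩ :=
    ivt_root hx0gt (mul_neg_of_neg_of_pos hlastsign hx0pos)
  -- bottom root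
  have h0sign : (-1:ℝ) ^ (n - 1) * p.eval (β ⟨0, by omega⟩) < 0 := by
    have h := hsign ⟨0, by omega⟩
    simpa using h
  obtain ⟨x1, hx1lt, hx1sign⟩ := exists_eval_neg_sign hdegpos hlcpos (β ⟨0, by omega⟩)
  rw [hdeg] at hx1sign
  have hpow : (-1:ℝ) ^ (n + 1) = (-1:ℝ) ^ (n - 1) := by
    rw [show n + 1 = (n - 1) + 2 by omega, pow_add]
    norm_num
  rw [hpow] at hx1sign
  have hbotneg : p.eval x1 * p.eval (β ⟨0, by omega⟩) < 0 := by
    have hmul := mul_neg_of_pos_of_neg hx1sign h0sign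
    have h3 : ((-1:ℝ) ^ (n - 1) * p.eval x1) * ((-1:ℝ) ^ (n - 1) * p.eval (β ⟨0, by omega⟩))
        = ((-1:ℝ) ^ (n - 1) * (-1:ℝ) ^ (n - 1)) * (p.eval x1 * p.eval (β ⟨0, by omega⟩)) := by
      ring
    rw [h3, neg_one_pow_mul_self, one_mul] at hmul
    exact hmul
  obtain ⟨rbot, hrbot_mem, hrbot⟩ := ivt_root hx1lt hbotneg
  -- the gap claim
  have claim : ∀ k : Fin (n + 1), ∃ x : ℝ, p.eval x = 0 ∧
      (∀ h : (k:ℕ) < n, x < β ⟨(k:ℕ), h⟩) ∧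
      (∀ _ : 0 < (k:ℕ), β ⟨(k:ℕ) - 1, by omega⟩ < x) := by
    intro k
    rcases Nat.eq_zero_or_pos (k:ℕ) with hk0 | hkpos
    · refine ⟨rbot, hrbot, fun h => ?_, fun h => by omega⟩
      have heq : (⟨(k:ℕ), h⟩ : Fin n) = ⟨0, by omega⟩ := by ext; simp [hk0]
      rw [heq]
      exact hrbot_mem.2
    · rcases eq_or_lt_of_le (show (k:ℕ) ≤ n from by omega) with hkn | hkn
      · refine ⟨rtop, hrtop, fun h => by omega, fun h => ?_⟩
        have heq : (⟨(k:ℕ) - 1, by omega⟩ : Fin n) = ⟨n - 1, by omega⟩ := by ext; simp [hkn]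
        rw [heq]
        exact hrtop_mem.1
      · have hlt : β ⟨(k:ℕ) - 1, by omega⟩ < β ⟨(k:ℕ) - 1 + 1, by omega⟩ := by
          apply hβ
          rw [Fin.mk_lt_mk]
          omega
        have hadj' := hadj ((k:ℕ) - 1) (by omega)
        obtain ⟨x, hx_mem, hx⟩ := ivt_root hlt hadj'
        refine ⟨x, hx, fun h => ?_, fun h => hx_mem.1⟩
        have heq : (⟨(k:ℕ) - 1 + 1, by omega⟩ : Fin n) = ⟨(k:ℕ), h⟩ := by ext; simp; omega
        rw [heq] at hx_mem
        exact hx_mem.2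
  set γ : Fin (n + 1) → ℝ := fun k => (claim k).choose with hγdef
  have hγroot : ∀ k, p.eval (γ k) = 0 := fun k => (claim k).choose_spec.1
  have hlt1 : ∀ k : Fin n, γ k.castSucc < β k := by
    intro k
    have h := (claim k.castSucc).choose_spec.2.1 (by simpa using k.isLt)
    have heq : (⟨((k.castSucc : Fin (n+1)) : ℕ), by simpa using k.isLt⟩ : Fin n) = k := by
      ext; simp
    rw [heq] at h
    exact h
  have hlt2 : ∀ k : Fin n, β k < γ k.succ := by
    intro k
    have h := (claim k.succ).choose_spec.2.2 (by simp)
    have heq : (⟨((k.succ : Fin (n+1)) : ℕ) - 1, by omega⟩ : Fin n) = k := by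
      ext; simp
    rw [heq] at h
    exact h
  have hγmono : StrictMono γ :=
    Fin.strictMono_iff_lt_succ.2 fun i => lt_trans (hlt1 i) (hlt2 i)
  -- factorization of p
  have hc2 : (0:ℝ) < (a + 1) ^ n := by positivity
  set q : ℝ[X] := C ((a + 1) ^ n) * ∏ k : Fin (n + 1), (X - C (γ k)) with hqdef
  have hqdeg : q.natDegree = n + 1 := fac_natDegree hqdef hc2.ne'
  have hqcoeff : q.coeff (n + 1) = (a + 1) ^ n := fac_coeff hqdef hc2.ne'
  have hqeval : ∀ k, q.eval (γ k) = 0 := fun k => by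
    rw [fac_eval hqdef]
    exact mul_eq_zero_of_right _ (Finset.prod_eq_zero (Finset.mem_univ k) (by ring))
  have hdiff : p - q = 0 := by
    apply Polynomial.eq_zero_of_natDegree_lt_card_of_eval_eq_zero _ hγmono.injective
    · intro k
      rw [eval_sub, hγroot k, hqeval k, sub_self]
    · rw [Fintype.card_fin]
      rcases eq_or_ne (p - q) 0 with h | h
      · rw [h]; simp
      · have hle : (p - q).natDegree ≤ n + 1 :=
          le_trans (natDegree_sub_le _ _) (by rw [hdeg, hqdeg]; simp)
        rcases lt_or_eq_of_le hle with h' | h'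
        · exact h'
        · exfalso
          have hne := Polynomial.leadingCoeff_ne_zero.2 h
          rw [leadingCoeff, h'] at hne
          exact hne (by rw [coeff_sub, hco, hqcoeff, sub_self])
  exact ⟨γ, hγmono, sub_eq_zero.1 hdiff, fun k => ⟨hlt1 k, hlt2 k⟩⟩
lemma main_fac (a : ℝ) (ha1 : -1 < a) (ha2 : a < 0) :
    ∀ n : ℕ, 1 ≤ n → ∃ β : Fin n → ℝ, StrictMono β ∧
      elT a n = C ((a + 1) ^ (n - 1)) * ∏ k, (X - C (β k)) := by
  intro n hn
  induction n with
  | zero => omega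
  | succ m ih =>
    rcases Nat.eq_zero_or_pos m with hm | hm
    · subst hm
      refine ⟨fun _ => 0, fun i j hij => ?_, ?_⟩
      · rw [Fin.lt_iff_val_lt_val] at hij
        have hi := i.isLt
        have hj := j.isLt
        omega
      show elT a 1 = _
      rw [elT]
      simp
    · obtain ⟨β, hβ, hfac⟩ := ih hm
      obtain ⟨γ, hγ, hfac', _⟩ := step a ha1 ha2 hm hβ hfac
      exact ⟨γ, hγ, by simpa using hfac'⟩

lemma eval_S_real (a : ℝ) (m : ℕ) (x : ℝ) :
    (elephantS a m).eval (x : ℂ) = (((elT a m).eval x : ℝ) : ℂ) := by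
  rw [S_eq_map, Polynomial.eval_map, show ((x : ℝ) : ℂ) = algebraMap ℝ ℂ x from
    (congrFun Complex.coe_algebraMap x).symm,
    Polynomial.eval₂_at_apply (p := elT a m) (algebraMap ℝ ℂ) x]
  rfl

lemma pack (a : ℝ) (ha1 : -1 < a) {m : ℕ} {δ : Fin m → ℝ} (hδ : StrictMono δ)
    (hfac : elT a m = C ((a + 1) ^ (m - 1)) * ∏ k, (X - C (δ k))) :
    (∀ k, (elephantS a m).eval (δ k : ℂ) = 0) ∧
    (∀ z : ℂ, (elephantS a m).eval z = 0 → ∃ k, z = (δ k : ℂ)) ∧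
    (∀ k, (elephantS a m).derivative.eval (δ k : ℂ) ≠ 0) := by
  have ha1' : (0:ℝ) < a + 1 := by linarith
  have hc : (0:ℝ) < (a + 1) ^ (m - 1) := by positivity
  have hSfac : elephantS a m
      = C (((a + 1) ^ (m - 1) : ℝ) : ℂ) * ∏ k, (X - C ((δ k : ℝ) : ℂ)) := by
    rw [S_eq_map, hfac, Polynomial.map_mul, map_C, Polynomial.map_prod]
    simp [Polynomial.map_sub]
  refine ⟨?_, ?_, ?_⟩
  · intro k
    rw [eval_S_real]
    rw [fac_eval hfac]
    norm_cast
    exact mul_eq_zero_of_right _ (Finset.prod_eq_zero (Finset.mem_univ k) (by ring))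
  · intro z hz
    rw [hSfac] at hz
    simp only [eval_mul, eval_C, eval_prod, eval_sub, eval_X, mul_eq_zero] at hz
    rcases hz with hz | hz
    · exfalso
      exact (Complex.ofReal_ne_zero.2 hc.ne') hz
    · rcases Finset.prod_eq_zero_iff.1 hz with ⟨k, _, hk⟩
      exact ⟨k, by linear_combination hk⟩
  · intro k
    rw [S_eq_map, derivative_map, Polynomial.eval_map]
    have h := Polynomial.eval₂_at_apply (p := (elT a m).derivative) (algebraMap ℝ ℂ) (δ k)
    rw [show ((δ k : ℝ) : ℂ) = algebraMap ℝ ℂ (δ k) from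
      (congrFun Complex.coe_algebraMap (δ k)).symm, h]
    rw [fac_deriv_eval hfac k]
    have hP := prod_erase_sign hδ k
    have hPne : (∏ j ∈ Finset.univ.erase k, (δ k - δ j)) ≠ 0 := by
      intro h0
      rw [h0, mul_zero] at hP
      exact lt_irrefl 0 hP
    simp only [Complex.coe_algebraMap, ne_eq, Complex.ofReal_eq_zero]
    exact mul_ne_zero hc.ne' hPne

theorem stmt_16 (a : ℝ) (ha : a ∈ Set.Ioo (-1 : ℝ) 0) (n : ℕ) (hn : 1 ≤ n) :
    ∃ (β : Fin n → ℝ) (γ : Fin (n + 1) → ℝ),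
      StrictMono β ∧ StrictMono γ ∧
      (∀ k, (elephantS a n).eval (β k : ℂ) = 0) ∧
      (∀ k, (elephantS a (n + 1)).eval (γ k : ℂ) = 0) ∧
      (∀ z : ℂ, (elephantS a n).eval z = 0 → ∃ k, z = (β k : ℂ)) ∧
      (∀ z : ℂ, (elephantS a (n + 1)).eval z = 0 → ∃ k, z = (γ k : ℂ)) ∧
      (∀ k, (elephantS a n).derivative.eval (β k : ℂ) ≠ 0) ∧
      (∀ k, (elephantS a (n + 1)).derivative.eval (γ k : ℂ) ≠ 0) ∧
      (∀ k : Fin n, γ k.castSucc < β k ∧ β k < γ k.succ) := by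
  obtain ⟨ha1, ha2⟩ := ha
  obtain ⟨β, hβ, hfac⟩ := main_fac a ha1 ha2 n hn
  obtain ⟨γ, hγ, hfacγ, hint⟩ := step a ha1 ha2 hn hβ hfac
  have hfacγ' : elT a (n + 1) = C ((a + 1) ^ (n + 1 - 1)) * ∏ k, (X - C (γ k)) := by
    simpa using hfacγ
  obtain ⟨hβ1, hβ2, hβ3⟩ := pack a ha1 hβ hfac
  obtain ⟨hγ1, hγ2, hγ3⟩ := pack a ha1 hγ hfacγ'
  exact ⟨β, γ, hβ, hγ, hβ1, hγ1, hβ2, hγ2, hβ3, hγ3, hint⟩
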